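/- Let X be a subshift over a finite alphabet Λ. Then the following are equivalent: (i) for every x ∈ X, the orbit of ξ_x under the spectral partial action is dense in Ω_X; (ii) X is collectively cofinal. -/

import Mathlib

open scoped Classical

namespace SubshiftPaper

variable {Λ : Type}

/-- The left shift on infinite words. -/
def shiftMap (x : ℕ → Λ) : ℕ → Λ := fun n => x (n + 1)

/-- Concatenation of a finite word with an infinite word. -/
def cat (α : List Λ) (y : ℕ → Λ) : ℕ → Λ := fun n => α.getD n (y (n - α.length))

/-- `α` is a prefix of the infinite word `x`. -/
def Pref (α : List Λ) (x : ℕ → Λ) : Prop := ∀ (i : ℕ) (h : i < α.length), x i = α[i]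

/-- The tail of `x` after `n` letters. -/
def tail (x : ℕ → Λ) (n : ℕ) : ℕ → Λ := fun i => x (n + i)

/-- `α` occurs in `x` at position `n`. -/
def OccursAt (α : List Λ) (x : ℕ → Λ) (n : ℕ) : Prop :=
  ∀ (i : ℕ) (h : i < α.length), x (n + i) = α[i]

/-- `α` occurs in `x` (as a contiguous block of letters). -/
def Occurs (α : List Λ) (x : ℕ → Λ) : Prop := ∃ n, OccursAt α x n

/-- `X` is a subshift: a nonempty closed shift-invariant subset. -/
def IsSubshift [TopologicalSpace Λ] (X : Set (ℕ → Λ)) : Prop :=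
  X.Nonempty ∧ IsClosed X ∧ ∀ x ∈ X, shiftMap x ∈ X

/-- The set of infinite words avoiding all words in `F`. -/
def ForbidSpace (F : Set (List Λ)) : Set (ℕ → Λ) := {x | ∀ α ∈ F, ¬ Occurs α x}

/-- `X` is a subshift of finite type. -/
def IsSFT (X : Set (ℕ → Λ)) : Prop := ∃ F : Set (List Λ), F.Finite ∧ X = ForbidSpace F

/-- The follower set of a finite word. -/
def follower (X : Set (ℕ → Λ)) (α : List Λ) : Set (ℕ → Λ) := {y | y ∈ X ∧ cat α y ∈ X}

/-- The cylinder of a finite word. -/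
def cylinder (X : Set (ℕ → Λ)) (α : List Λ) : Set (ℕ → Λ) := {x | x ∈ X ∧ Pref α x}

/-- The language of `X`. -/
def Language (X : Set (ℕ → Λ)) : Set (List Λ) := {α | ∃ x ∈ X, Occurs α x}

/-- The embedding of finite words into the free group. -/
def wd (α : List Λ) : FreeGroup Λ := (α.map FreeGroup.of).prod

/-- Indicator function of a set of group elements. -/
noncomputable def chi (s : Set (FreeGroup Λ)) : FreeGroup Λ → Bool :=
  fun g => if g ∈ s then true else false

/-- The set `ξ_x ⊆ 𝔽`. -/
def xiSet [DecidableEq Λ] (X : Set (ℕ → Λ)) (x : ℕ → Λ) : Set (FreeGroup Λ) :=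
  {g | ∃ α β : List Λ, g = wd α * (wd β)⁻¹ ∧
        FreeGroup.norm g = α.length + β.length ∧
        Pref α x ∧ tail x α.length ∈ follower X α ∩ follower X β}

/-- `ξ_x` as an element of `2^𝔽`. -/
noncomputable def xiB [DecidableEq Λ] (X : Set (ℕ → Λ)) (x : ℕ → Λ) : FreeGroup Λ → Bool :=
  chi (xiSet X x)

/-- The spectrum `Ω_X`: the closure of `{ξ_x : x ∈ X}` in `2^𝔽`. -/
noncomputable def Omega [DecidableEq Λ] (X : Set (ℕ → Λ)) : Set (FreeGroup Λ → Bool) :=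
  closure ((fun x => xiB X x) '' X)

/-- Left translation of an element of `2^𝔽`. -/
def translate (g : FreeGroup Λ) (ξ : FreeGroup Λ → Bool) : FreeGroup Λ → Bool :=
  fun h => ξ (g⁻¹ * h)

/-- `x` is the stem of `ξ`: `ξ ∩ 𝔽₊` is exactly the set of prefixes of `x`. -/
def IsStem (ξ : FreeGroup Λ → Bool) (x : ℕ → Λ) : Prop :=
  {g | ξ g = true} ∩ {g | ∃ α : List Λ, g = wd α} =
    {g | ∃ α : List Λ, g = wd α ∧ Pref α x}

/-- `x` is the stem of `ξ` at `g`: `ξ ∩ g𝔽₊ = {gα : α is a prefix of x}`. -/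
def IsStemAt (ξ : FreeGroup Λ → Bool) (g : FreeGroup Λ) (x : ℕ → Λ) : Prop :=
  {h | ξ h = true} ∩ {h | ∃ α : List Λ, h = g * wd α} =
    {h | ∃ α : List Λ, h = g * wd α ∧ Pref α x}

/-- The orbit of `ξ` under the spectral partial action. -/
def Orbit (ξ : FreeGroup Λ → Bool) : Set (FreeGroup Λ → Bool) :=
  {η | ∃ g : FreeGroup Λ, ξ g⁻¹ = true ∧ η = translate g ξ}

/-- Topological freeness of the spectral partial action. -/
noncomputable def TopFree [DecidableEq Λ] (X : Set (ℕ → Λ)) : Prop :=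
  ∀ g : FreeGroup Λ, g ≠ 1 →
    ∀ U : Set (FreeGroup Λ → Bool), IsOpen U →
      (U ∩ Omega X ⊆ {ξ | ξ g⁻¹ = true ∧ translate g ξ = ξ}) → U ∩ Omega X = ∅

/-- The periodic infinite word `γ^∞`. -/
noncomputable def perInf [Nonempty Λ] (γ : List Λ) : ℕ → Λ :=
  fun n => γ.getD (n % γ.length) (Classical.arbitrary Λ)

/-- `n`-fold concatenation of a finite word with itself. -/
def rep : ℕ → List Λ → List Λ
  | 0, _ => []
  | n + 1, γ => γ ++ rep n γ

/-- `γ` is a circuit relative to `X`. -/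
noncomputable def IsCircuit [Nonempty Λ] (X : Set (ℕ → Λ)) (γ : List Λ) : Prop :=
  γ ≠ [] ∧ perInf γ ∈ X

/-- `y` is an exit for the circuit `γ`. -/
noncomputable def IsExit [Nonempty Λ] (X : Set (ℕ → Λ)) (γ : List Λ) (y : ℕ → Λ) : Prop :=
  y ≠ perInf γ ∧ cat γ y ∈ X

/-- `z` is a strong exit for the circuit `γ`. -/
noncomputable def IsStrongExit [Nonempty Λ] (X : Set (ℕ → Λ)) (γ : List Λ) (z : ℕ → Λ) : Prop :=
  z ≠ perInf γ ∧ ∀ n : ℕ, cat (rep n γ) z ∈ X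

/-- The sets `X_g` of the standard partial action. -/
def Xg [DecidableEq Λ] (X : Set (ℕ → Λ)) (g : FreeGroup Λ) : Set (ℕ → Λ) :=
  {x | ∃ α β : List Λ, g = wd α * (wd β)⁻¹ ∧
        FreeGroup.norm g = α.length + β.length ∧
        ∃ y ∈ follower X α ∩ follower X β, x = cat α y}

/-- `x` is a fixed point for `θ_g`. -/
def IsThetaFixed [DecidableEq Λ] (X : Set (ℕ → Λ)) (g : FreeGroup Λ) (x : ℕ → Λ) : Prop :=
  ∃ α β : List Λ, g = wd α * (wd β)⁻¹ ∧
    FreeGroup.norm g = α.length + β.length ∧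
    ∃ y ∈ follower X α ∩ follower X β, x = cat β y ∧ cat α y = x

/-- `x` may be collectively reached from the finite set `B`. -/
def CollReached (X : Set (ℕ → Λ)) (B : Finset (List Λ)) (x : ℕ → Λ) : Prop :=
  ∃ α γ : List Λ, Pref α x ∧ ∀ β ∈ B, cat (β ++ γ) (tail x α.length) ∈ X

/-- `X` is collectively cofinal. -/
def CollCofinal (X : Set (ℕ → Λ)) : Prop :=
  ∀ B : Finset (List Λ), ↑B ⊆ Language X → (⋂ β ∈ B, follower X β).Nonempty →
    ∀ x ∈ X, CollReached X B x

/-- `X` is strongly cofinal. -/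
def StrongCofinal (X : Set (ℕ → Λ)) : Prop :=
  ∀ β ∈ Language X, ∃ M : ℕ, ∀ x ∈ X, ∃ α γ : List Λ, Pref α x ∧
    cat (β ++ γ) (tail x α.length) ∈ X ∧ α.length + γ.length ≤ M

/-- The even shift. -/
def evenShift : Set (ℕ → Fin 2) :=
  ForbidSpace {w | ∃ n : ℕ, w = 0 :: (List.replicate (2 * n + 1) 1 ++ [0])}



section Aux

variable {Λ : Type}

lemma cat_nil (y : ℕ → Λ) : cat ([] : List Λ) y = y := by
  funext n; simp [cat]

lemma cat_lt {u : List Λ} {y : ℕ → Λ} {n : ℕ} (h : n < u.length) :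
    cat u y n = u[n] := List.getD_eq_getElem u _ h

lemma cat_ge {u : List Λ} {y : ℕ → Λ} {n : ℕ} (h : u.length ≤ n) :
    cat u y n = y (n - u.length) := List.getD_eq_default u _ h

lemma cat_append (u v : List Λ) (y : ℕ → Λ) : cat (u ++ v) y = cat u (cat v y) := by
  funext n
  rcases lt_or_ge n u.length with h | h
  · rw [cat_lt (by simp; omega), cat_lt h]
    exact (List.getElem_append_left h)
  · rcases lt_or_ge n (u.length + v.length) with h2 | h2
    · rw [cat_lt (by simp; omega), cat_ge h, cat_lt (by omega)]
      rw [List.getElem_append_right h]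
    · rw [cat_ge (by simp; omega), cat_ge h, cat_ge (by omega)]
      congr 1; simp; omega

lemma tail_tail (x : ℕ → Λ) (m k : ℕ) : tail (tail x m) k = tail x (m + k) := by
  funext i; simp [tail]; ring_nf

lemma tail_zero (x : ℕ → Λ) : tail x 0 = x := by funext i; simp [tail]

lemma tail_cat_le {u : List Λ} {y : ℕ → Λ} {k : ℕ} (h : k ≤ u.length) :
    tail (cat u y) k = cat (u.drop k) y := by
  funext i
  rcases lt_or_ge (k + i) u.length with h2 | h2
  · rw [tail, cat_lt h2, cat_lt (by simp; omega)]
    simp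
  · rw [tail, cat_ge h2, cat_ge (by simp; omega)]
    congr 1; simp; omega

lemma tail_cat (u : List Λ) (y : ℕ → Λ) : tail (cat u y) u.length = y := by
  rw [tail_cat_le le_rfl, List.drop_length, cat_nil]

lemma pref_cat (u : List Λ) (y : ℕ → Λ) : Pref u (cat u y) := by
  intro i h; exact cat_lt h

lemma cat_pref {u : List Λ} {x : ℕ → Λ} (h : Pref u x) : cat u (tail x u.length) = x := by
  funext n
  rcases lt_or_ge n u.length with h2 | h2
  · rw [cat_lt h2, ← h n h2]
  · rw [cat_ge h2, tail]; congr 1; omega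

lemma pref_append {u v : List Λ} {x : ℕ → Λ} (h : Pref (u ++ v) x) : Pref u x := by
  intro i hi
  have := h i (by simp; omega)
  rwa [List.getElem_append_left hi] at this

lemma pref_tail {u v : List Λ} {x : ℕ → Λ} (h : Pref (u ++ v) x) :
    Pref v (tail x u.length) := by
  intro i hi
  have := h (u.length + i) (by simp; omega)
  rw [List.getElem_append_right (by omega)] at this
  simpa [tail] using this

lemma pref_congr {u : List Λ} {y y' : ℕ → Λ} {m : ℕ} (hm : ∀ i < m, y i = y' i)
    (hl : u.length ≤ m) : Pref u y ↔ Pref u y' := by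
  constructor <;> intro h i hi
  · rw [← hm i (by omega)]; exact h i hi
  · rw [hm i (by omega)]; exact h i hi

lemma pref_cat_le {v u : List Λ} {y : ℕ → Λ} (h : Pref v (cat u y)) (hl : v.length ≤ u.length) :
    v = u.take v.length := by
  apply List.ext_getElem (by simp; omega)
  intro i hi hi2
  have := h i hi
  rw [cat_lt (by omega)] at this
  simp [← this]

lemma pref_cat_ge {v u : List Λ} {y : ℕ → Λ} (h : Pref v (cat u y)) (hl : u.length ≤ v.length) :
    v = u ++ v.drop u.length ∧ Pref (v.drop u.length) y := by
  constructor
  · apply List.ext_getElem (by simp; omega)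
    intro i hi hi2
    rcases lt_or_ge i u.length with h2 | h2
    · rw [List.getElem_append_left h2]
      have := h i (by omega)
      rw [cat_lt h2] at this; exact this.symm
    · rw [List.getElem_append_right h2]
      simp only [List.getElem_drop]
      congr 1; omega
  · intro i hi
    simp only [List.getElem_drop]
    have := h (u.length + i) (by simp at hi ⊢; omega)
    rwa [cat_ge (by omega), Nat.add_sub_cancel_left] at this

/-- The prefix word of `x` of length `n`. -/
def prefW (x : ℕ → Λ) (n : ℕ) : List Λ := (List.range n).map x

@[simp] lemma length_prefW (x : ℕ → Λ) (n : ℕ) : (prefW x n).length = n := by simp [prefW]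

@[simp] lemma getElem_prefW (x : ℕ → Λ) (n i : ℕ) (h : i < (prefW x n).length) :
    (prefW x n)[i] = x i := by simp [prefW]

lemma pref_prefW (x : ℕ → Λ) (n : ℕ) : Pref (prefW x n) x := by
  intro i h; simp

lemma cat_prefW_tail (x : ℕ → Λ) (n : ℕ) : cat (prefW x n) (tail x n) = x := by
  have := cat_pref (pref_prefW x n)
  simpa using this

lemma prefW_congr {y y' : ℕ → Λ} {m n : ℕ} (hm : ∀ i < m, y i = y' i) (h : n ≤ m) :
    prefW y n = prefW y' n := by
  apply List.ext_getElem (by simp)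
  intro i hi hi2
  simp only [getElem_prefW]
  exact hm i (by simp at hi; omega)

lemma tail_mem {X : Set (ℕ → Λ)} [TopologicalSpace Λ] (hX : IsSubshift X) {x : ℕ → Λ}
    (hx : x ∈ X) (n : ℕ) : tail x n ∈ X := by
  induction n with
  | zero => rwa [tail_zero]
  | succ n ih =>
      have : tail x (n + 1) = shiftMap (tail x n) := by
        funext i; simp [tail, shiftMap]; ring_nf
      rw [this]
      exact hX.2.2 _ ih

lemma finite_len_le [Finite Λ] (n : ℕ) : {l : List Λ | l.length ≤ n}.Finite := by
  induction n with
  | zero =>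
      apply Set.Finite.subset (Set.finite_singleton ([] : List Λ))
      intro l hl; simpa using hl
  | succ n ih =>
      have : {l : List Λ | l.length ≤ n + 1} ⊆
          insert ([] : List Λ) (⋃ a : Λ, (fun l => a :: l) '' {l | l.length ≤ n}) := by
        intro l hl
        rcases l with _ | ⟨a, l⟩
        · simp
        · right
          simp only [Set.mem_iUnion, Set.mem_image]
          exact ⟨a, l, by simpa using hl, rfl⟩
      exact Set.Finite.subset (Set.Finite.insert _ (Set.finite_iUnion fun a => ih.image _)) this

end Aux


section FG

variable {Λ : Type} [DecidableEq Λ]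

set_option linter.unusedSectionVars false

/-- The word of positive letters. -/
def posW (A : List Λ) : List (Λ × Bool) := A.map (fun a => (a, true))

/-- The `pos-neg` word representing `wd A * (wd B)⁻¹`. -/
def LW (A B : List Λ) : List (Λ × Bool) := posW A ++ (B.map (fun a => (a, false))).reverse

@[simp] lemma length_LW (A B : List Λ) : (LW A B).length = A.length + B.length := by
  simp [LW, posW]

lemma wd_nil : wd ([] : List Λ) = 1 := rfl

lemma wd_append (u v : List Λ) : wd (u ++ v) = wd u * wd v := by simp [wd]

lemma wd_singleton (a : Λ) : wd [a] = FreeGroup.of a := by simp [wd]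

lemma wd_eq_mk (A : List Λ) : wd A = FreeGroup.mk (posW A) := by
  induction A with
  | nil => simp [wd, posW]; rfl
  | cons a A ih =>
      have : wd (a :: A) = FreeGroup.of a * wd A := by simp [wd]
      rw [this, ih]
      have : FreeGroup.of a = FreeGroup.mk [(a, true)] := rfl
      rw [this, FreeGroup.mul_mk]
      rfl

lemma wd_mul_inv (A B : List Λ) : wd A * (wd B)⁻¹ = FreeGroup.mk (LW A B) := by
  rw [wd_eq_mk, wd_eq_mk, FreeGroup.inv_mk, FreeGroup.mul_mk]
  congr 1
  simp [FreeGroup.invRev, posW, LW]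

/-- Words with no adjacent cancelling pair are reduced. -/
lemma reduce_chain' {L : List (Λ × Bool)} 
    (h : List.Chain' (fun a b => ¬(b.1 = a.1 ∧ b.2 = !a.2)) L) :
    FreeGroup.reduce L = L := by
  induction L with
  | nil => rfl
  | cons x L ih =>
      rw [FreeGroup.reduce.cons, ih h.tail]
      cases L with
      | nil => rfl
      | cons hd tl =>
          have hR : ¬(hd.1 = x.1 ∧ hd.2 = !x.2) := (List.isChain_cons_cons.mp h).1
          have hcond : ¬(x.1 = hd.1 ∧ x.2 = !hd.2) :=
            fun ⟨h1, h2⟩ => hR ⟨h1.symm, by simp [h2]⟩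
          simp only []
          rw [if_neg hcond]

lemma chain'_const_bool (l : List (Λ × Bool)) (c : Bool) (hc : ∀ p ∈ l, p.2 = c) :
    List.Chain' (fun a b : Λ × Bool => ¬(b.1 = a.1 ∧ b.2 = !a.2)) l := by
  induction l with
  | nil => exact List.isChain_nil
  | cons x l ih =>
      cases l with
      | nil => exact List.isChain_singleton _
      | cons hd tl =>
          rw [List.Chain', List.isChain_cons_cons]
          refine ⟨?_, ih fun p hp => hc p (by simp [hp])⟩
          intro ⟨h1, h2⟩
          have hx := hc x (by simp)
          have hh := hc hd (by simp)
          rw [hx, hh] at h2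
          cases c <;> simp at h2

lemma chain'_LW {A B : List Λ} (hAB : A = [] ∨ B = [] ∨ A.getLast? ≠ B.getLast?) :
    List.Chain' (fun a b : Λ × Bool => ¬(b.1 = a.1 ∧ b.2 = !a.2)) (LW A B) := by
  rw [LW, List.Chain', List.isChain_append]
  refine ⟨chain'_const_bool _ true (by simp [posW]), 
          chain'_const_bool _ false (by simp), ?_⟩
  intro p hp q hq
  rcases hAB with h | h | h
  · simp [h, posW] at hp
  · simp [h] at hq
  rw [List.head?_reverse] at hq
  simp only [posW] at hp
  rw [List.getLast?_map] at hp hq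
  intro ⟨h1, h2⟩
  apply h
  rcases Option.map_eq_some_iff.mp hp with ⟨a, ha, rfl⟩
  rcases Option.map_eq_some_iff.mp hq with ⟨b, hb, rfl⟩
  simp at h1
  rw [ha, hb, h1]

lemma toWord_LW {A B : List Λ} (hAB : A = [] ∨ B = [] ∨ A.getLast? ≠ B.getLast?) :
    (wd A * (wd B)⁻¹).toWord = LW A B := by
  rw [wd_mul_inv, FreeGroup.toWord_mk, reduce_chain' (chain'_LW hAB)]

lemma norm_LW {A B : List Λ} (hAB : A = [] ∨ B = [] ∨ A.getLast? ≠ B.getLast?) :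
    FreeGroup.norm (wd A * (wd B)⁻¹) = A.length + B.length := by
  rw [FreeGroup.norm, toWord_LW hAB, length_LW]

lemma norm_wd (A : List Λ) : FreeGroup.norm (wd A) = A.length := by
  have := norm_LW (A := A) (B := ([] : List Λ)) (Or.inr (Or.inl rfl))
  simpa [wd_nil] using this

lemma toWord_of_norm {A B : List Λ} 
    (h : FreeGroup.norm (wd A * (wd B)⁻¹) = A.length + B.length) :
    (wd A * (wd B)⁻¹).toWord = LW A B := by
  have hg : wd A * (wd B)⁻¹ = FreeGroup.mk (LW A B) := wd_mul_inv A B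
  have hsub : ((wd A * (wd B)⁻¹).toWord).Sublist (LW A B) := by
    rw [hg, FreeGroup.toWord_mk]
    exact FreeGroup.Red.sublist FreeGroup.reduce.red
  have hnorm : FreeGroup.norm (wd A * (wd B)⁻¹) = (wd A * (wd B)⁻¹).toWord.length := rfl
  exact hsub.eq_of_length (by rw [← hnorm, h, length_LW])

lemma LW_inj {A B A' B' : List Λ} (h : LW A B = LW A' B') : A = A' ∧ B = B' := by
  have key : ∀ C D : List Λ, (LW C D).filter (fun p => p.2) = posW C ∧ 
      (LW C D).filter (fun p => !p.2) = (D.map (fun a => (a, false))).reverse := by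
    intro C D
    constructor
    · rw [LW, List.filter_append, List.filter_eq_self.mpr (by simp [posW]), 
        List.filter_eq_nil_iff.mpr (by simp), List.append_nil]
    · rw [LW, List.filter_append, List.filter_eq_nil_iff.mpr (by simp [posW]),
        List.filter_eq_self.mpr (by simp), List.nil_append]
  have h1 : posW A = posW A' := by
    rw [← (key A B).1, ← (key A' B').1, h]
  have h2 : (B.map (fun a => (a, false))).reverse = (B'.map (fun a => (a, false))).reverse := by
    rw [← (key A B).2, ← (key A' B').2, h]
  have hf : Function.Injective (fun a : Λ => (a, true)) := by
    intro a b hab; simpa using hab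
  have hf2 : Function.Injective (fun a : Λ => (a, false)) := by
    intro a b hab; simpa using hab
  exact ⟨(List.map_injective_iff.mpr hf) h1,
    (List.map_injective_iff.mpr hf2) (List.reverse_injective h2)⟩

lemma lemU {A B A' B' : List Λ} (h : wd A * (wd B)⁻¹ = wd A' * (wd B')⁻¹)
    (hn : FreeGroup.norm (wd A * (wd B)⁻¹) = A.length + B.length)
    (hn' : FreeGroup.norm (wd A' * (wd B')⁻¹) = A'.length + B'.length) :
    A = A' ∧ B = B' := by
  apply LW_inj
  rw [← toWord_of_norm hn, ← toWord_of_norm hn', h]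

lemma lemS_aux : ∀ n (A B A₀ B₀ : List Λ), A.length + B.length ≤ n →
    wd A * (wd B)⁻¹ = wd A₀ * (wd B₀)⁻¹ →
    FreeGroup.norm (wd A₀ * (wd B₀)⁻¹) = A₀.length + B₀.length →
    ∃ τ, A = A₀ ++ τ ∧ B = B₀ ++ τ := by
  intro n
  induction n with
  | zero =>
      intro A B A₀ B₀ hlen h hn
      have hA : A = [] := List.eq_nil_of_length_eq_zero (by omega)
      have hB : B = [] := List.eq_nil_of_length_eq_zero (by omega)
      subst hA; subst hB
      have := lemU h (by rw [norm_LW (Or.inl rfl)]) hn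
      exact ⟨[], by simp [← this.1, ← this.2]⟩
  | succ n ih =>
      intro A B A₀ B₀ hlen h hn
      by_cases hJC : A = [] ∨ B = [] ∨ A.getLast? ≠ B.getLast?
      · have := lemU h (norm_LW hJC) hn
        exact ⟨[], by simp [← this.1, ← this.2]⟩
      · push_neg at hJC
        obtain ⟨hA, hB, hlast⟩ := hJC
        have hga : B.getLast hB = A.getLast hA := by
          have e1 := List.getLast?_eq_getLast hA
          have e2 := List.getLast?_eq_getLast hB
          rw [e1, e2] at hlast
          exact (Option.some_inj.mp hlast).symm
        have hAe : A.dropLast ++ [A.getLast hA] = A := List.dropLast_append_getLast hA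
        have hBe : B.dropLast ++ [A.getLast hA] = B := by
          rw [← hga]; exact List.dropLast_append_getLast hB
        have e : wd A * (wd B)⁻¹ = wd A.dropLast * (wd B.dropLast)⁻¹ := by
          conv_lhs => rw [← hAe, ← hBe]
          rw [wd_append, wd_append, mul_inv_rev]
          group
        have heq : wd A.dropLast * (wd B.dropLast)⁻¹ = wd A₀ * (wd B₀)⁻¹ := by
          rw [← e, h]
        have hlen2 : A.dropLast.length + B.dropLast.length ≤ n := by
          have h1 : A.length = A.dropLast.length + 1 := by
            conv_lhs => rw [← hAe]
            simp
          have h2 : B.length = B.dropLast.length + 1 := by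
            conv_lhs => rw [← hBe]
            simp
          omega
        obtain ⟨τ, hτ1, hτ2⟩ := ih A.dropLast B.dropLast A₀ B₀ hlen2 heq hn
        refine ⟨τ ++ [A.getLast hA], ?_, ?_⟩
        · rw [← List.append_assoc, ← hτ1, hAe]
        · rw [← List.append_assoc, ← hτ2, hBe]

lemma lemS {A B A₀ B₀ : List Λ} (h : wd A * (wd B)⁻¹ = wd A₀ * (wd B₀)⁻¹)
    (hn : FreeGroup.norm (wd A₀ * (wd B₀)⁻¹) = A₀.length + B₀.length) :
    ∃ τ, A = A₀ ++ τ ∧ B = B₀ ++ τ :=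
  lemS_aux (A.length + B.length) A B A₀ B₀ le_rfl h hn

end FG


section Xi

variable {Λ : Type} [DecidableEq Λ] [TopologicalSpace Λ] {X : Set (ℕ → Λ)}

set_option linter.unusedSectionVars false

lemma xiB_eq_true_iff (X : Set (ℕ → Λ)) (x : ℕ → Λ) (g : FreeGroup Λ) :
    xiB X x g = true ↔ g ∈ xiSet X x := by
  by_cases h : g ∈ xiSet X x <;> simp [xiB, chi, h]

lemma lemA_direct {A B : List Λ} {w : ℕ → Λ}
    (hJC : A = [] ∨ B = [] ∨ A.getLast? ≠ B.getLast?)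
    (hx : cat A w ∈ X) (hw : w ∈ X) (hB : cat B w ∈ X) :
    wd A * (wd B)⁻¹ ∈ xiSet X (cat A w) := by
  refine ⟨A, B, rfl, norm_LW hJC, pref_cat A w, ?_⟩
  rw [tail_cat]
  exact ⟨⟨hw, hx⟩, ⟨hw, hB⟩⟩

lemma lemA_aux (hX : IsSubshift X) :
    ∀ n (A B : List Λ) (w : ℕ → Λ), A.length + B.length ≤ n →
      cat A w ∈ X → w ∈ X → cat B w ∈ X → wd A * (wd B)⁻¹ ∈ xiSet X (cat A w) := by
  intro n
  induction n with
  | zero =>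
      intro A B w hlen hx hw hB
      exact lemA_direct (Or.inl (List.eq_nil_of_length_eq_zero (by omega))) hx hw hB
  | succ n ih =>
      intro A B w hlen hx hw hB
      by_cases hJC : A = [] ∨ B = [] ∨ A.getLast? ≠ B.getLast?
      · exact lemA_direct hJC hx hw hB
      push_neg at hJC
      obtain ⟨hA, hB0, hlast⟩ := hJC
      have hga : B.getLast hB0 = A.getLast hA := by
        have e1 := List.getLast?_eq_getLast hA
        have e2 := List.getLast?_eq_getLast hB0
        rw [e1, e2] at hlast
        exact (Option.some_inj.mp hlast).symm
      set A1 := A.dropLast with hA1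
      set B1 := B.dropLast with hB1
      set a := A.getLast hA with haa
      have hAe : A1 ++ [a] = A := List.dropLast_append_getLast hA
      have hBe : B1 ++ [a] = B := by
        rw [← hga]; exact List.dropLast_append_getLast hB0
      rw [← hAe] at hx ⊢
      rw [← hBe] at hB ⊢
      rw [cat_append] at hx hB ⊢
      set w' := cat [a] w with hw'
      have e : wd (A1 ++ [a]) * (wd (B1 ++ [a]))⁻¹ = wd A1 * (wd B1)⁻¹ := by
        rw [wd_append, wd_append, mul_inv_rev]
        group
      rw [e]
      have hw'X : w' ∈ X := by
        have ht : tail (cat B1 w') B1.length = w' := tail_cat B1 w'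
        rw [← ht]
        exact tail_mem hX hB _
      have hlen2 : A1.length + B1.length ≤ n := by
        have l1 : A1.length + 1 = A.length := by rw [← hAe]; simp
        have l2 : B1.length + 1 = B.length := by rw [← hBe]; simp
        omega
      exact ih A1 B1 w' hlen2 hx hw'X hB

lemma lemA (hX : IsSubshift X) {A B : List Λ} {w : ℕ → Λ}
    (hx : cat A w ∈ X) (hw : w ∈ X) (hB : cat B w ∈ X) :
    wd A * (wd B)⁻¹ ∈ xiSet X (cat A w) :=
  lemA_aux hX (A.length + B.length) A B w le_rfl hx hw hB

lemma lemB {x : ℕ → Λ} {A B : List Λ} (hA : Pref A x)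
    (h : wd A * (wd B)⁻¹ ∈ xiSet X x) : cat B (tail x A.length) ∈ X := by
  obtain ⟨α₀, β₀, hg, hn, hpref, hfol⟩ := h
  rw [hg] at hn
  obtain ⟨τ, hA1, hB1⟩ := lemS hg hn
  subst hA1
  subst hB1
  have hpτ : Pref τ (tail x α₀.length) := pref_tail hA
  rw [cat_append]
  have e : cat τ (tail x (α₀ ++ τ).length) = tail x α₀.length := by
    rw [List.length_append, ← tail_tail]
    exact cat_pref hpτ
  rw [e]
  exact hfol.2.2

lemma lemC_P (hX : IsSubshift X) {z : ℕ → Λ} {α δ : List Λ} (hz : z ∈ X)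
    (hα : cat α z ∈ X) (hδ : cat δ z ∈ X) {h : FreeGroup Λ}
    (hh : h ∈ xiSet X (cat δ z)) : wd α * (wd δ)⁻¹ * h ∈ xiSet X (cat α z) := by
  obtain ⟨α', β', hg, hn, hpref, hfol⟩ := hh
  subst hg
  rcases le_or_gt α'.length δ.length with hle | hlt
  · have hT : α' = δ.take α'.length := pref_cat_le hpref hle
    have hδe : δ = α' ++ δ.drop α'.length := by
      conv_lhs => rw [← List.take_append_drop α'.length δ]
      rw [← hT]
    set δ₂ := δ.drop α'.length with hδ₂
    have e : wd α * (wd δ)⁻¹ * (wd α' * (wd β')⁻¹) = wd α * (wd (β' ++ δ₂))⁻¹ := by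
      conv_lhs => rw [hδe]
      rw [wd_append, wd_append, mul_inv_rev, mul_inv_rev]
      group
    rw [e]
    apply lemA hX hα hz
    rw [cat_append]
    have e2 : cat δ₂ z = tail (cat δ z) α'.length := (tail_cat_le hle).symm
    rw [e2]
    exact hfol.2.2
  · obtain ⟨hαe, hpz⟩ := pref_cat_ge hpref (le_of_lt hlt)
    set α₂ := α'.drop δ.length with hα₂
    have e : wd α * (wd δ)⁻¹ * (wd α' * (wd β')⁻¹) = wd (α ++ α₂) * (wd β')⁻¹ := by
      conv_lhs => rw [hαe]
      rw [wd_append, wd_append]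
      group
    rw [e]
    set w := tail z α₂.length with hw
    have hxeq : cat (α ++ α₂) w = cat α z := by
      rw [cat_append, cat_pref hpz]
    have hweq : tail (cat δ z) α'.length = w := by
      funext i
      rw [tail, cat_ge (by omega), hw, tail]
      congr 1
      have : α₂.length = α'.length - δ.length := by rw [hα₂]; simp
      omega
    rw [← hxeq]
    apply lemA hX (by rw [hxeq]; exact hα) (tail_mem hX hz _)
    rw [← hw, ← hweq]
    exact hfol.2.2

lemma lemC (hX : IsSubshift X) {z : ℕ → Λ} {α δ : List Λ} (hz : z ∈ X)
    (hα : cat α z ∈ X) (hδ : cat δ z ∈ X) :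
    translate (wd δ * (wd α)⁻¹) (xiB X (cat α z)) = xiB X (cat δ z) := by
  funext h
  have hginv : (wd δ * (wd α)⁻¹)⁻¹ = wd α * (wd δ)⁻¹ := by group
  have hiff : (wd α * (wd δ)⁻¹ * h ∈ xiSet X (cat α z)) ↔ (h ∈ xiSet X (cat δ z)) := by
    constructor
    · intro hm
      have h2 := lemC_P hX hz hδ hα hm
      have e : wd δ * (wd α)⁻¹ * (wd α * (wd δ)⁻¹ * h) = h := by group
      rwa [e] at h2
    · exact lemC_P hX hz hα hδ
  show xiB X (cat α z) ((wd δ * (wd α)⁻¹)⁻¹ * h) = xiB X (cat δ z) h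
  rw [hginv]
  by_cases hm : h ∈ xiSet X (cat δ z)
  · simp [xiB, chi, hm, hiff.mpr hm]
  · have hm2 : wd α * (wd δ)⁻¹ * h ∉ xiSet X (cat α z) := fun hc => hm (hiff.mp hc)
    simp [xiB, chi, hm, hm2]

lemma closed_window [DiscreteTopology Λ] (hC : IsClosed X) {p : ℕ → Λ} (hp : p ∉ X) :
    ∃ W, ∀ w : ℕ → Λ, (∀ i < W, w i = p i) → w ∉ X := by
  have hO : IsOpen Xᶜ := hC.isOpen_compl
  rw [isOpen_pi_iff] at hO
  obtain ⟨I, u, hu, hsub⟩ := hO p hp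
  refine ⟨I.sup id + 1, fun w hw hwX => ?_⟩
  have : w ∈ (↑I : Set ℕ).pi u := by
    intro i hi
    rw [hw i (lt_of_le_of_lt (Finset.le_sup (f := id) hi) (Nat.lt_succ_self _))]
    exact (hu i hi).2
  exact hsub this hwX

lemma open_window {U : Set (FreeGroup Λ → Bool)} (hU : IsOpen U) {ξ : FreeGroup Λ → Bool}
    (hξ : ξ ∈ U) : ∃ I : Finset (FreeGroup Λ), ∀ η, (∀ g ∈ I, η g = ξ g) → η ∈ U := by
  rw [isOpen_pi_iff] at hU
  obtain ⟨I, u, hu, hsub⟩ := hU ξ hξ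
  refine ⟨I, fun η hη => hsub ?_⟩
  intro g hg
  rw [hη g hg]
  exact (hu g hg).2

end Xi

/-- every orbit of a point `ξ_x` is dense in `Ω_X` iff `X` is collectively
cofinal. -/
theorem orbit_dense_iff_collCofinal {Λ : Type} [Fintype Λ] [Nonempty Λ] [DecidableEq Λ]
    [TopologicalSpace Λ] [DiscreteTopology Λ]
    (X : Set (ℕ → Λ)) (hX : IsSubshift X) :
    (∀ x ∈ X, Omega X ⊆ closure (Orbit (xiB X x))) ↔ CollCofinal X := by
  constructor
  · -- dense orbits imply collective cofinality
    intro hdense B hBlang hFB x hx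
    rcases Finset.eq_empty_or_nonempty B with rfl | hBne
    · exact ⟨[], [], fun i h => absurd h (by simp), by simp⟩
    obtain ⟨z, hz⟩ := hFB
    have hzF : ∀ β ∈ B, z ∈ follower X β := fun β hβ => Set.mem_iInter₂.mp hz β hβ
    obtain ⟨β₀, hβ₀⟩ := hBne
    have hzX : z ∈ X := (hzF β₀ hβ₀).1
    have hΩ : xiB X z ∈ Omega X := subset_closure ⟨z, hzX, rfl⟩
    have hcl := hdense x hx hΩ
    have hUopen : IsOpen (⋂ β ∈ B, (fun η : FreeGroup Λ → Bool => η ((wd β)⁻¹)) ⁻¹' {true}) :=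
      isOpen_biInter_finset fun β _ =>
        (continuous_apply ((wd β)⁻¹)).isOpen_preimage _ (isOpen_discrete _)
    have hzU : xiB X z ∈ ⋂ β ∈ B, (fun η : FreeGroup Λ → Bool => η ((wd β)⁻¹)) ⁻¹' {true} := by
      rw [Set.mem_iInter₂]
      intro β hβ
      simp only [Set.mem_preimage, Set.mem_singleton_iff]
      rw [xiB_eq_true_iff]
      refine ⟨[], β, by rw [wd_nil, one_mul], ?_, fun i hi => absurd hi (by simp), ?_⟩
      · rw [FreeGroup.norm_inv_eq, norm_wd]
        simp
      · simp only [List.length_nil]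
        rw [tail_zero]
        exact ⟨⟨hzX, by rw [cat_nil]; exact hzX⟩, hzF β hβ⟩
    obtain ⟨η, hηU, hηOrb⟩ := mem_closure_iff.mp hcl _ hUopen hzU
    obtain ⟨g, hgx, rfl⟩ := hηOrb
    rw [xiB_eq_true_iff] at hgx
    obtain ⟨α₀, δ, hgeq, hn, hpref₀, hfol₀⟩ := hgx
    refine ⟨α₀, δ, hpref₀, fun β hβ => ?_⟩
    have hβU := Set.mem_iInter₂.mp hηU β hβ
    simp only [Set.mem_preimage, Set.mem_singleton_iff] at hβU
    have hmm : xiB X x (g⁻¹ * (wd β)⁻¹) = true := hβU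
    rw [xiB_eq_true_iff] at hmm
    have hrw : g⁻¹ * (wd β)⁻¹ = wd α₀ * (wd (β ++ δ))⁻¹ := by
      rw [hgeq, wd_append]
      group
    rw [hrw] at hmm
    exact lemB hpref₀ hmm
  · -- collective cofinality implies dense orbits
    intro hcc x hx
    have key : ∀ y ∈ X, xiB X y ∈ closure (Orbit (xiB X x)) := by
      intro y hy
      rw [mem_closure_iff]
      intro U hU hyU
      obtain ⟨I, hI⟩ := open_window hU hyU
      set N := I.sup FreeGroup.norm with hN
      have hWex : ∀ p : ℕ × List Λ, ∃ W : ℕ, cat p.2 (tail y p.1) ∉ X →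
          ∀ w : ℕ → Λ, (∀ i < W, w i = cat p.2 (tail y p.1) i) → w ∉ X := by
        intro p
        by_cases hd : cat p.2 (tail y p.1) ∈ X
        · exact ⟨0, fun hc => absurd hd hc⟩
        · obtain ⟨W, hW⟩ := closed_window hX.2.1 hd
          exact ⟨W, fun _ => hW⟩
      choose Wf hWf using hWex
      set m := N + (Finset.range (N + 1) ×ˢ (finite_len_le (Λ := Λ) N).toFinset).sup Wf with hm
      have hNm : N ≤ m := by rw [hm]; exact Nat.le_add_right _ _
      have hBfin : {β' : List Λ | β'.length ≤ N + m ∧ cat β' (tail y m) ∈ X}.Finite :=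
        (finite_len_le (N + m)).subset fun l hl => hl.1
      have hBlang : ↑hBfin.toFinset ⊆ Language X := by
        intro β' hβ'
        rw [Finset.mem_coe, Set.Finite.mem_toFinset] at hβ'
        exact ⟨cat β' (tail y m), hβ'.2, 0, fun i hilt => by rw [zero_add]; exact cat_lt hilt⟩
      have hFB : (⋂ β' ∈ hBfin.toFinset, follower X β').Nonempty := by
        refine ⟨tail y m, Set.mem_iInter₂.mpr fun β' hβ' => ?_⟩
        rw [Set.Finite.mem_toFinset] at hβ'
        exact ⟨tail_mem hX hy m, hβ'.2⟩
      obtain ⟨α, γ, hpα, hH⟩ := hcc _ hBlang hFB x hx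
      have hH' : ∀ β' : List Λ, β'.length ≤ N + m → cat β' (tail y m) ∈ X →
          cat (β' ++ γ) (tail x α.length) ∈ X := fun β' h1 h2 =>
        hH β' (by rw [Set.Finite.mem_toFinset]; exact ⟨h1, h2⟩)
      set z := tail x α.length with hzdef
      have hxz : x = cat α z := (cat_pref hpα).symm
      have hzX : z ∈ X := tail_mem hX hx _
      set δ := prefW y m ++ γ with hδ
      have hy'X : cat δ z ∈ X := by
        rw [hδ]
        exact hH' (prefW y m) (by simp) (by rw [cat_prefW_tail]; exact hy)
      set y' := cat δ z with hy'def
      have hagree : ∀ i < m, y' i = y i := by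
        intro i hi
        rw [hy'def, hδ, cat_lt (by simp; omega),
          List.getElem_append_left (by simp; omega)]
        simp
      have htaily' : tail y' m = cat γ z := by
        have h0 : tail (cat (prefW y m ++ γ) z) ((prefW y m).length) =
            cat ((prefW y m ++ γ).drop (prefW y m).length) z := tail_cat_le (by simp)
        rw [List.drop_left] at h0
        rw [hy'def, hδ]
        simpa using h0
      have himpa : ∀ h : FreeGroup Λ, FreeGroup.norm h ≤ N → h ∈ xiSet X y → h ∈ xiSet X y' := by
        intro h hnh hmem
        obtain ⟨α', β', hg, hn, hpref, hfol⟩ := hmem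
        have hj : α'.length ≤ N := by omega
        have hβ'N : β'.length ≤ N := by omega
        have hjm : α'.length ≤ m := le_trans hj hNm
        have hpref' : Pref α' y' := (pref_congr hagree hjm).mpr hpref
        set seg := prefW (tail y α'.length) (m - α'.length) with hseg
        have hsegcat : cat seg (tail y m) = tail y α'.length := by
          have h0 := cat_prefW_tail (tail y α'.length) (m - α'.length)
          rwa [tail_tail, Nat.add_sub_cancel' hjm] at h0
        have hβ''X : cat (β' ++ seg) (tail y m) ∈ X := by
          rw [cat_append, hsegcat]
          exact hfol.2.2
        have hlen'' : (β' ++ seg).length ≤ N + m := by simp [hseg]; omega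
        have hHH := hH' _ hlen'' hβ''X
        have hty' : tail y' α'.length = cat seg (cat γ z) := by
          have h1 := cat_prefW_tail (tail y' α'.length) (m - α'.length)
          rw [tail_tail, Nat.add_sub_cancel' hjm] at h1
          have h2 : prefW (tail y' α'.length) (m - α'.length) = seg := by
            rw [hseg]
            apply prefW_congr (m := m - α'.length) _ le_rfl
            intro i hi
            simp only [tail]
            exact hagree _ (by omega)
          rw [h2, htaily'] at h1
          exact h1.symm
        refine ⟨α', β', hg, hn, hpref', ⟨?_, ?_⟩⟩
        · exact ⟨tail_mem hX hy'X _, by rw [cat_pref hpref']; exact hy'X⟩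
        · refine ⟨tail_mem hX hy'X _, ?_⟩
          rw [hty']
          rw [cat_append, cat_append] at hHH
          exact hHH
      have himpb : ∀ h : FreeGroup Λ, FreeGroup.norm h ≤ N → h ∈ xiSet X y' → h ∈ xiSet X y := by
        intro h hnh hmem
        obtain ⟨α', β', hg, hn, hpref', hfol'⟩ := hmem
        have hj : α'.length ≤ N := by omega
        have hβ'N : β'.length ≤ N := by omega
        have hjm : α'.length ≤ m := le_trans hj hNm
        have hpref : Pref α' y := (pref_congr hagree hjm).mp hpref'
        have hclaim : cat β' (tail y α'.length) ∈ X := by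
          by_contra hc
          apply hWf (α'.length, β') hc (cat β' (tail y' α'.length)) _ hfol'.2.2
          intro i hi
          rcases lt_or_ge i β'.length with h2 | h2
          · rw [cat_lt h2, cat_lt h2]
          · rw [cat_ge h2, cat_ge h2]
            simp only [tail]
            apply hagree
            have hmemp : (α'.length, β') ∈
                Finset.range (N + 1) ×ˢ (finite_len_le (Λ := Λ) N).toFinset := by
              rw [Finset.mem_product, Finset.mem_range, Set.Finite.mem_toFinset]
              exact ⟨by omega, hβ'N⟩
            have hle := Finset.le_sup (f := Wf) hmemp
            omega
        exact ⟨α', β', hg, hn, hpref,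
          ⟨⟨tail_mem hX hy _, by rw [cat_pref hpref]; exact hy⟩,
           ⟨tail_mem hX hy _, hclaim⟩⟩⟩
      have hginvmem : xiB X x ((wd δ * (wd α)⁻¹)⁻¹) = true := by
        rw [xiB_eq_true_iff]
        have e : (wd δ * (wd α)⁻¹)⁻¹ = wd α * (wd δ)⁻¹ := by group
        rw [e, hxz]
        exact lemA hX (hxz ▸ hx) hzX hy'X
      have hCeq : translate (wd δ * (wd α)⁻¹) (xiB X x) = xiB X y' := by
        conv_lhs => rw [hxz]
        exact lemC hX hzX (hxz ▸ hx) hy'X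
      refine ⟨xiB X y', hI _ ?_, ?_⟩
      · intro h hh
        have hnh : FreeGroup.norm h ≤ N := Finset.le_sup (f := FreeGroup.norm) hh
        by_cases hmem : h ∈ xiSet X y
        · simp [xiB, chi, hmem, himpa h hnh hmem]
        · have hm2 : h ∉ xiSet X y' := fun hc => hmem (himpb h hnh hc)
          simp [xiB, chi, hmem, hm2]
      · exact ⟨_, hginvmem, hCeq.symm⟩
    intro η hη
    exact closure_minimal
      (fun ξ hξ => by obtain ⟨y, hyX, rfl⟩ := hξ; exact key y hyX) isClosed_closure hη

end SubshiftPaper
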